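/- (Forward–Backward Lemma, abstract form.) Let G and T be metric spaces equipped with their Borel σ-algebras, let 𝒫 be a Borel probability measure on G, and let θ : G → G, Ψ : G → T and θ_F : T → T be Borel measurable maps satisfying Ψ ∘ θ = θ_F ∘ Ψ. For n ≥ 0 set 𝒫_n := (θ^n)_*𝒫 and 𝒬_n := (θ_F^n)_*(Ψ_*𝒫). Assume: (1) there is a Borel measurable map Φ : T → G such that for every n ≥ 0, Φ(Ψ(g)) = g for 𝒫_n-almost every g ∈ G; (2) the sequence (𝒬_n)_{n≥0} converges weakly to a Borel probability measure 𝒬_F on T; (3) Φ is continuous 𝒬_F-almost everywhere. Then (𝒫_n)_{n≥0} converges weakly to the push-forward measure Φ_*𝒬_F. -/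
import Mathlib


open MeasureTheory Filter Topology

section AuxForwardBackward
open Set

/-- Auxiliary: frontier of a superlevel set is contained in discontinuity points union level set. -/
lemma frontier_superlevel_subset {Ω : Type*} [TopologicalSpace Ω] (g : Ω → ℝ) (t : ℝ) :
    frontier {x | t < g x} ⊆ {x | ¬ ContinuousAt g x} ∪ {x | g x = t} := by
  intro x hx
  by_cases hcont : ContinuousAt g x
  · right
    by_contra hne
    rcases lt_or_gt_of_ne hne with h | h
    · -- g x < t : x in interior of complement, so not in closure
      have : {y | g y < t} ∈ 𝓝 x := hcont (isOpen_Iio.mem_nhds h)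
      have hint : x ∈ interior {x | t < g x}ᶜ := by
        rw [mem_interior_iff_mem_nhds]
        filter_upwards [this] with y hy
        simp only [Set.mem_compl_iff, Set.mem_setOf_eq, not_lt]
        exact hy.le
      rw [interior_compl] at hint
      exact hint hx.1
    · -- t < g x : x in interior of the set
      have : {y | t < g y} ∈ 𝓝 x := hcont (isOpen_Ioi.mem_nhds h)
      exact hx.2 (mem_interior_iff_mem_nhds.mpr this)
  · exact Or.inl hcont

/-- Mapping theorem for bounded, measurable, a.e. continuous functions. -/
lemma tendsto_integral_of_ae_continuousAt
    {Ω : Type*} [MetricSpace Ω] [MeasurableSpace Ω] [BorelSpace Ω]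
    (μs : ℕ → Measure Ω) [∀ n, IsProbabilityMeasure (μs n)]
    (μ : Measure Ω) [IsProbabilityMeasure μ]
    (hweak : ∀ f : BoundedContinuousFunction Ω ℝ,
      Tendsto (fun n => ∫ x, f x ∂(μs n)) atTop (𝓝 (∫ x, f x ∂μ)))
    (h : Ω → ℝ) (hm : Measurable h) (C : ℝ) (hb : ∀ x, ‖h x‖ ≤ C)
    (hc : ∀ᵐ x ∂μ, ContinuousAt h x) :
    Tendsto (fun n => ∫ x, h x ∂(μs n)) atTop (𝓝 (∫ x, h x ∂μ)) := by
  -- reduce to the nonnegative function g = h + (C+1)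
  have hΩ : Nonempty Ω := by
    by_contra hne
    rw [not_nonempty_iff] at hne
    have h0 : μ Set.univ = 0 := by simp [Set.eq_empty_of_isEmpty (Set.univ : Set Ω)]
    simp at h0
  have hC : 0 ≤ C := le_trans (norm_nonneg _) (hb (Classical.arbitrary Ω))
  set g : Ω → ℝ := fun x => h x + (C + 1) with hg_def
  have hg_nn : ∀ x, 0 ≤ g x := fun x => by
    have := (abs_le.mp (hb x)).1; simp only [hg_def]; linarith
  set B : ℝ := 2 * C + 1 with hB_def
  have hg_le : ∀ x, g x ≤ B := fun x => by
    have := (abs_le.mp (hb x)).2; simp only [hg_def, hB_def]; linarith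
  have hgm : Measurable g := hm.add_const _
  have hgc : ∀ᵐ x ∂μ, ContinuousAt g x := by
    filter_upwards [hc] with x hx using hx.add continuousAt_const
  -- integrability
  have hint : ∀ (ν : Measure Ω) [IsProbabilityMeasure ν], Integrable h ν := by
    intro ν _
    exact (integrable_const C).mono' hm.aestronglyMeasurable (Eventually.of_forall hb)
  -- weak convergence at ProbabilityMeasure level
  have hμsne : ∀ n, (μs n) Set.univ ≠ 0 := fun n => by simp
  have hμne : μ Set.univ ≠ 0 := by simp
  set νs : ℕ → ProbabilityMeasure Ω := fun n => ⟨μs n, inferInstance⟩ with hνs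
  set ν : ProbabilityMeasure Ω := ⟨μ, inferInstance⟩ with hν
  have hweak' : Tendsto νs atTop (𝓝 ν) := by
    rw [ProbabilityMeasure.tendsto_iff_forall_integral_tendsto]
    exact hweak
  -- a.e. t, the superlevel sets converge
  have hcount : Set.Countable {t : ℝ | 0 < μ {x | g x = t}} :=
    Measure.countable_meas_level_set_pos hgm
  have hae : ∀ᵐ t ∂(volume.restrict (Set.Ioi (0:ℝ))),
      Tendsto (fun n => μs n {x | t < g x}) atTop (𝓝 (μ {x | t < g x})) := by
    apply ae_restrict_of_ae
    have : ∀ᵐ t : ℝ ∂volume, μ {x | g x = t} = 0 := by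
      rw [ae_iff]
      refine measure_mono_null ?_ (hcount.measure_zero _)
      intro t ht
      simp only [Set.mem_setOf_eq] at ht ⊢
      exact pos_iff_ne_zero.mpr ht
    filter_upwards [this] with t ht
    have hfr : μ (frontier {x | t < g x}) = 0 := by
      apply measure_mono_null (frontier_superlevel_subset g t)
      apply measure_union_null _ ht
      exact ae_iff.mp hgc
    exact ProbabilityMeasure.tendsto_measure_of_null_frontier_of_tendsto' hweak' hfr
  -- layer cake
  have layer : ∀ (ρ : Measure Ω), ∫⁻ x, ENNReal.ofReal (g x) ∂ρ
      = ∫⁻ t in Set.Ioi (0:ℝ), ρ {x | t < g x} := fun ρ =>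
    lintegral_eq_lintegral_meas_lt ρ (Eventually.of_forall hg_nn) hgm.aemeasurable
  -- dominated convergence in t
  have hdom : Tendsto (fun n => ∫⁻ t in Set.Ioi (0:ℝ), μs n {x | t < g x}) atTop
      (𝓝 (∫⁻ t in Set.Ioi (0:ℝ), μ {x | t < g x})) := by
    apply tendsto_lintegral_of_dominated_convergence
      (fun t => (Set.Ioc (0:ℝ) B).indicator (fun _ => (1 : ENNReal)) t)
    · exact fun n => Antitone.measurable (fun s t hst =>
        measure_mono (fun ω hω => lt_of_le_of_lt hst hω))
    · intro n
      filter_upwards [ae_restrict_mem measurableSet_Ioi] with t ht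
      by_cases hle : t ≤ B
      · have : t ∈ Set.Ioc (0:ℝ) B := ⟨ht, hle⟩
        simp only [Set.indicator_of_mem this]
        exact prob_le_one
      · have : t ∉ Set.Ioc (0:ℝ) B := fun hmem => hle hmem.2
        simp only [Set.indicator_of_notMem this]
        have : {x | t < g x} = ∅ := by
          ext x; simp only [Set.mem_setOf_eq, Set.mem_empty_iff_false, iff_false, not_lt]
          exact (hg_le x).trans (le_of_not_ge hle)
        simp [this]
    · apply ne_of_lt
      calc ∫⁻ t in Set.Ioi (0:ℝ), (Set.Ioc (0:ℝ) B).indicator (fun _ => (1 : ENNReal)) t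
          ≤ ∫⁻ t, (Set.Ioc (0:ℝ) B).indicator (fun _ => (1 : ENNReal)) t :=
            setLIntegral_le_lintegral _ _
        _ = volume (Set.Ioc (0:ℝ) B) := by
            rw [lintegral_indicator measurableSet_Ioc]; simp
        _ < ⊤ := measure_Ioc_lt_top
    · exact hae
  -- convert to lintegral of g
  have hlin : Tendsto (fun n => ∫⁻ x, ENNReal.ofReal (g x) ∂(μs n)) atTop
      (𝓝 (∫⁻ x, ENNReal.ofReal (g x) ∂μ)) := by
    simp_rw [layer]; exact hdom
  -- finiteness
  have hfin : ∀ (ρ : Measure Ω) [IsProbabilityMeasure ρ],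
      ∫⁻ x, ENNReal.ofReal (g x) ∂ρ ≠ ⊤ := by
    intro ρ _
    apply ne_of_lt
    calc ∫⁻ x, ENNReal.ofReal (g x) ∂ρ ≤ ∫⁻ _, ENNReal.ofReal B ∂ρ :=
          lintegral_mono (fun x => ENNReal.ofReal_le_ofReal (hg_le x))
      _ = ENNReal.ofReal B := by simp
      _ < ⊤ := ENNReal.ofReal_lt_top
  -- to Bochner integrals of g
  have hreal : Tendsto (fun n => ∫ x, g x ∂(μs n)) atTop (𝓝 (∫ x, g x ∂μ)) := by
    have hconv : ∀ (ρ : Measure Ω), ∫ x, g x ∂ρ = (∫⁻ x, ENNReal.ofReal (g x) ∂ρ).toReal :=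
      fun ρ => integral_eq_lintegral_of_nonneg_ae (Eventually.of_forall hg_nn)
        hgm.aestronglyMeasurable
    simp_rw [hconv]
    exact (ENNReal.tendsto_toReal (hfin μ)).comp hlin
  -- subtract the constant
  have heq : ∀ (ρ : Measure Ω) [IsProbabilityMeasure ρ],
      ∫ x, h x ∂ρ = (∫ x, g x ∂ρ) - (C + 1) := by
    intro ρ _
    rw [hg_def]
    rw [integral_add (hint ρ) (integrable_const _)]
    simp
  simp_rw [heq]
  exact hreal.sub tendsto_const_nhds

end AuxForwardBackward

/-- Forward–Backward Lemma, abstract form: given measurable maps `θ`, `Ψ`, `θF` with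
`Ψ ∘ θ = θF ∘ Ψ`, a measurable left inverse `Φ` of `Ψ` (almost surely for each
push-forward `𝒫_n`), weak convergence of the push-forwards `𝒬_n = (θF^n)_*(Ψ_*𝒫)` to a
probability measure `QF`, and continuity of `Φ` `QF`-almost everywhere, the
push-forwards `𝒫_n = (θ^n)_*𝒫` converge weakly to `Φ_*QF`. -/
theorem forward_backward_lemma
    {G T : Type*} [MetricSpace G] [MeasurableSpace G] [BorelSpace G]
    [MetricSpace T] [MeasurableSpace T] [BorelSpace T]
    (P : Measure G) [IsProbabilityMeasure P]
    (θ : G → G) (Ψ : G → T) (θF : T → T)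
    (hθ : Measurable θ) (hΨ : Measurable Ψ) (hθF : Measurable θF)
    (hcomm : Ψ ∘ θ = θF ∘ Ψ)
    (Φ : T → G) (hΦ : Measurable Φ)
    (h1 : ∀ n : ℕ, ∀ᵐ g ∂(Measure.map (θ^[n]) P), Φ (Ψ g) = g)
    (QF : Measure T) [IsProbabilityMeasure QF]
    (h2 : ∀ f : BoundedContinuousFunction T ℝ,
      Tendsto (fun n : ℕ => ∫ t, f t ∂(Measure.map (θF^[n]) (Measure.map Ψ P))) atTop
        (𝓝 (∫ t, f t ∂QF)))
    (h3 : ∀ᵐ t ∂QF, ContinuousAt Φ t) :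
    ∀ f : BoundedContinuousFunction G ℝ,
      Tendsto (fun n : ℕ => ∫ g, f g ∂(Measure.map (θ^[n]) P)) atTop
        (𝓝 (∫ g, f g ∂(Measure.map Φ QF))) := by
  -- commutation for iterates
  have hcomm' : ∀ n : ℕ, Ψ ∘ θ^[n] = θF^[n] ∘ Ψ := by
    intro n
    induction n with
    | zero => simp
    | succ n ih =>
      rw [Function.iterate_succ]
      calc Ψ ∘ (θ^[n] ∘ θ) = (Ψ ∘ θ^[n]) ∘ θ := rfl
        _ = (θF^[n] ∘ Ψ) ∘ θ := by rw [ih]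
        _ = θF^[n] ∘ (Ψ ∘ θ) := rfl
        _ = θF^[n] ∘ (θF ∘ Ψ) := by rw [hcomm]
        _ = (θF^[n] ∘ θF) ∘ Ψ := rfl
  -- measure identities
  have hmap : ∀ n : ℕ, Measure.map (θF^[n]) (Measure.map Ψ P)
      = Measure.map Ψ (Measure.map (θ^[n]) P) := by
    intro n
    rw [Measure.map_map (hθF.iterate n) hΨ, Measure.map_map hΨ (hθ.iterate n), ← hcomm' n]
  have hPinst : ∀ n : ℕ, IsProbabilityMeasure (Measure.map (θ^[n]) P) := fun n =>
    Measure.isProbabilityMeasure_map (hθ.iterate n).aemeasurable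
  have hQinst : ∀ n : ℕ, IsProbabilityMeasure (Measure.map (θF^[n]) (Measure.map Ψ P)) := by
    intro n
    rw [hmap n]
    have := hPinst n
    exact Measure.isProbabilityMeasure_map hΨ.aemeasurable
  -- ∫ f dP_n = ∫ (f ∘ Φ) dQ_n
  intro f
  have key : ∀ n : ℕ, ∫ g, f g ∂(Measure.map (θ^[n]) P)
      = ∫ t, f (Φ t) ∂(Measure.map (θF^[n]) (Measure.map Ψ P)) := by
    intro n
    rw [hmap n]
    calc ∫ g, f g ∂(Measure.map (θ^[n]) P)
        = ∫ g, f (Φ (Ψ g)) ∂(Measure.map (θ^[n]) P) :=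
          integral_congr_ae ((h1 n).mono fun g hg => (congrArg f hg).symm)
      _ = ∫ t, f (Φ t) ∂(Measure.map Ψ (Measure.map (θ^[n]) P)) :=
          (integral_map hΨ.aemeasurable
            ((f.continuous.measurable.comp hΦ).aestronglyMeasurable)).symm
  simp_rw [key]
  have hQFeq : ∫ g, f g ∂(Measure.map Φ QF) = ∫ t, f (Φ t) ∂QF :=
    integral_map hΦ.aemeasurable f.continuous.measurable.aestronglyMeasurable
  rw [hQFeq]
  have := fun n => hQinst n
  exact tendsto_integral_of_ae_continuousAt
    (fun n => Measure.map (θF^[n]) (Measure.map Ψ P)) QF h2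
    (fun t => f (Φ t)) (f.continuous.measurable.comp hΦ) ‖f‖
    (fun t => f.norm_coe_le_norm (Φ t))
    (h3.mono fun t ht => f.continuous.continuousAt.comp ht)
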